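/- For 0 < a < 1 and x, x₀ ∈ [0, 1] with a·x < 1 and a·x₀ < 1, the inequality log(1 − a x) ≥ log(1 − a x₀) + (−a/(1 − a x₀))(x − x₀) + (1/2)(−a²/(1−a)²)(x − x₀)² holds. -/

import Mathlib

/-- Quadratic minorization bound for log(1 − a x) used in the MM update of φ. -/
theorem log_minorization_phi (a x x₀ : ℝ) (ha0 : 0 < a) (ha1 : a < 1)
    (hx : x ∈ Set.Icc (0 : ℝ) 1) (hx₀ : x₀ ∈ Set.Icc (0 : ℝ) 1)
    (hax : a * x < 1) (hax₀ : a * x₀ < 1) :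
    Real.log (1 - a * x) ≥ Real.log (1 - a * x₀)
      + (-a / (1 - a * x₀)) * (x - x₀)
      + (1 / 2) * (-a ^ 2 / (1 - a) ^ 2) * (x - x₀) ^ 2 := by
  obtain ⟨hx0, hx1⟩ := hx
  obtain ⟨hx₀0, hx₀1⟩ := hx₀
  have hc : (0:ℝ) < 1 - a := by linarith
  have hq : (0:ℝ) < 1 - a * x₀ := by linarith
  set F : ℝ → ℝ := fun y => Real.log (1 - a * y) + a / (1 - a * x₀) * (y - x₀)
      + a ^ 2 / (2 * (1 - a) ^ 2) * (y - x₀) ^ 2 with hF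
  -- derivative of F
  have hder : ∀ y : ℝ, 1 - a * y ≠ 0 →
      HasDerivAt F (-a / (1 - a * y) + a / (1 - a * x₀)
        + a ^ 2 / (1 - a) ^ 2 * (y - x₀)) y := by
    intro y hne
    have h1 : HasDerivAt (fun y : ℝ => 1 - a * y) (-a) y := by
      simpa using ((hasDerivAt_id y).const_mul a).const_sub 1
    have h2 := ((hasDerivAt_id y).sub_const x₀).const_mul (a / (1 - a * x₀))
    have h3 := (((hasDerivAt_id y).sub_const x₀).pow 2).const_mul (a ^ 2 / (2 * (1 - a) ^ 2))
    have h4 := ((h1.log hne).add h2).add h3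
    convert h4 using 1
    · rfl
    · rfl
    · rfl
    simp only [id]
    field_simp
    ring
  -- positivity of 1 - a*y on [0,1]
  have hpos : ∀ y : ℝ, y ≤ 1 → 0 < 1 - a * y := by
    intro y hy
    nlinarith
  -- key: F x₀ ≤ F x
  have hmain : F x₀ ≤ F x := by
    rcases le_total x₀ x with hle | hle
    · have hmono : MonotoneOn F (Set.Icc x₀ 1) := by
        apply monotoneOn_of_deriv_nonneg (convex_Icc _ _)
        · intro y hy
          exact ((hder y (hpos y hy.2).ne').continuousAt).continuousWithinAt
        · intro y hy
          rw [interior_Icc] at hy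
          exact ((hder y (hpos y hy.2.le).ne').differentiableAt).differentiableWithinAt
        · intro y hy
          rw [interior_Icc] at hy
          rw [(hder y (hpos y hy.2.le).ne').deriv]
          have hp : 0 < 1 - a * y := hpos y hy.2.le
          have heq : -a / (1 - a * y) + a / (1 - a * x₀) + a ^ 2 / (1 - a) ^ 2 * (y - x₀)
              = a ^ 2 * (y - x₀) * ((1 - a * y) * (1 - a * x₀) - (1 - a) ^ 2)
                / ((1 - a) ^ 2 * ((1 - a * y) * (1 - a * x₀))) := by
            field_simp
            ring
          rw [heq]
          apply div_nonneg
          · have h5 : (1 - a) ≤ 1 - a * y := by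
              have := mul_le_of_le_one_right ha0.le hy.2.le
              linarith
            have h6 : (1 - a) ≤ 1 - a * x₀ := by
              have := mul_le_of_le_one_right ha0.le hx₀1
              linarith
            have hpq : (1 - a) * (1 - a) ≤ (1 - a * y) * (1 - a * x₀) :=
              mul_le_mul h5 h6 hc.le hp.le
            apply mul_nonneg (mul_nonneg (sq_nonneg a) (by linarith [hy.1]))
            nlinarith
          · positivity
      exact hmono (Set.mem_Icc.2 ⟨le_refl x₀, hx₀1⟩) (Set.mem_Icc.2 ⟨hle, hx1⟩) hle
    · have hanti : AntitoneOn F (Set.Icc 0 x₀) := by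
        apply antitoneOn_of_deriv_nonpos (convex_Icc _ _)
        · intro y hy
          exact ((hder y (hpos y (hy.2.trans hx₀1)).ne').continuousAt).continuousWithinAt
        · intro y hy
          rw [interior_Icc] at hy
          exact ((hder y (hpos y (hy.2.le.trans hx₀1)).ne').differentiableAt).differentiableWithinAt
        · intro y hy
          rw [interior_Icc] at hy
          have hy1 : y ≤ 1 := hy.2.le.trans hx₀1
          rw [(hder y (hpos y hy1).ne').deriv]
          have hp : 0 < 1 - a * y := hpos y hy1
          have heq : -a / (1 - a * y) + a / (1 - a * x₀) + a ^ 2 / (1 - a) ^ 2 * (y - x₀)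
              = a ^ 2 * (y - x₀) * ((1 - a * y) * (1 - a * x₀) - (1 - a) ^ 2)
                / ((1 - a) ^ 2 * ((1 - a * y) * (1 - a * x₀))) := by
            field_simp
            ring
          rw [heq]
          apply div_nonpos_of_nonpos_of_nonneg
          · have h5 : (1 - a) ≤ 1 - a * y := by
              have := mul_le_of_le_one_right ha0.le hy1
              linarith
            have h6 : (1 - a) ≤ 1 - a * x₀ := by
              have := mul_le_of_le_one_right ha0.le hx₀1
              linarith
            have hpq : (1 - a) * (1 - a) ≤ (1 - a * y) * (1 - a * x₀) :=
              mul_le_mul h5 h6 hc.le hp.le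
            apply mul_nonpos_of_nonpos_of_nonneg
            · apply mul_nonpos_of_nonneg_of_nonpos (sq_nonneg a)
              linarith [hy.2]
            · nlinarith
          · positivity
      exact hanti (Set.mem_Icc.2 ⟨hx0, hle⟩) (Set.mem_Icc.2 ⟨hx₀0, le_refl x₀⟩) hle
  have h0 : F x₀ = Real.log (1 - a * x₀) := by simp [hF]
  have h1 : F x = Real.log (1 - a * x) + a / (1 - a * x₀) * (x - x₀)
      + a ^ 2 / (2 * (1 - a) ^ 2) * (x - x₀) ^ 2 := rfl
  have e1 : (-a / (1 - a * x₀)) * (x - x₀) = -(a / (1 - a * x₀) * (x - x₀)) := by ring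
  have e2 : (1 / 2) * (-a ^ 2 / (1 - a) ^ 2) * (x - x₀) ^ 2
      = -(a ^ 2 / (2 * (1 - a) ^ 2) * (x - x₀) ^ 2) := by
    have hne : ((1 - a) ^ 2 : ℝ) ≠ 0 := by positivity
    field_simp
  rw [ge_iff_le, e1, e2]
  rw [h0, h1] at hmain
  linarith
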